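/- The action of the absolute Galois group on biased Shabat polynomials is faithful: for every field automorphism σ of Q̄ with σ ≠ id, there exists a polynomial f ∈ Q̄[z] with f(0) = 0, f′(0) = 1, and f(u) ∈ {−1, +1} for every u ∈ Q̄ with f′(u) = 0, such that f^σ ≠ f, where f^σ is obtained by applying σ to each coefficient of f. -/

import Mathlib

open Polynomial

noncomputable section

namespace BiasedShabatAux

local notation "K" => AlgebraicClosure ℚ

private def φ : ℚ →+* K := algebraMap ℚ K

private lemma derivative_ne_zero_of_natDegree_pos' {F : Type*} [Field F] [CharZero F] {p : F[X]}
    (h : 0 < p.natDegree) : p.derivative ≠ 0 := by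
  intro h0
  have := Polynomial.degree_derivative_eq p h
  rw [h0, degree_zero] at this
  exact (by simp : (⊥ : WithBot ℕ) ≠ ((p.natDegree - 1 : ℕ) : WithBot ℕ)) this


variable {F : Type*} [Field F]

private lemma natDegree_pos_of_derivative_ne_zero {p : F[X]} (h : p.derivative ≠ 0) :
    0 < p.natDegree := by
  by_contra hn
  push_neg at hn
  interval_cases hp : p.natDegree
  · exact h (by rw [eq_C_of_natDegree_eq_zero hp, derivative_C])


/-! ### Antiderivative -/

private def antider (p : F[X]) : F[X] := p.sum fun i a => C (a / ((i : F) + 1)) * X ^ (i + 1)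

private lemma derivative_antider [CharZero F] (p : F[X]) : (antider p).derivative = p := by
  unfold antider
  rw [Polynomial.sum, derivative_sum]
  conv_rhs => rw [← Polynomial.sum_C_mul_X_pow_eq p, Polynomial.sum]
  refine Finset.sum_congr rfl fun i _ => ?_
  rw [derivative_C_mul, derivative_X_pow, Nat.add_sub_cancel, ← mul_assoc, ← C_mul]
  congr 1
  push_cast
  rw [div_mul_cancel₀]
  exact Nat.cast_add_one_ne_zero i



variable {F : Type*} [Field F]

private theorem comp_eq_comp_same_deg [CharZero F] {u Q₁ Q₂ : F[X]}
    (hu : 0 < u.natDegree) (hQ₁ : 0 < Q₁.natDegree) (hdeg : Q₂.natDegree = Q₁.natDegree)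
    (h : u.comp Q₁ = u.comp Q₂) : ∃ z c : F, z ≠ 0 ∧ Q₂ = C z * Q₁ + C c := by
  have hQ₁0 : Q₁ ≠ 0 := fun h0 => by simp [h0] at hQ₁
  have hQ₂pos : 0 < Q₂.natDegree := by omega
  have hQ₂0 : Q₂ ≠ 0 := fun h0 => by simp [h0] at hQ₂pos
  have hu00 : u ≠ 0 := fun h0 => by simp [h0] at hu
  set n := u.natDegree with hn
  set w := Q₁.natDegree with hw
  have hwpos : 0 < w := hQ₁
  have hl₁ : Q₁.leadingCoeff ≠ 0 := leadingCoeff_ne_zero.mpr hQ₁0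
  have hl₂ : Q₂.leadingCoeff ≠ 0 := leadingCoeff_ne_zero.mpr hQ₂0
  have hu0 : u.leadingCoeff ≠ 0 := leadingCoeff_ne_zero.mpr hu00
  set ζ := Q₂.leadingCoeff / Q₁.leadingCoeff with hζ
  have hζ0 : ζ ≠ 0 := div_ne_zero hl₂ hl₁
  have hl2eq : Q₂.leadingCoeff = ζ * Q₁.leadingCoeff := (div_mul_cancel₀ _ hl₁).symm
  have hpow : Q₁.leadingCoeff ^ n = Q₂.leadingCoeff ^ n := by
    have h1 : (u.comp Q₁).leadingCoeff = u.leadingCoeff * Q₁.leadingCoeff ^ n :=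
      leadingCoeff_comp (by omega)
    have h2 : (u.comp Q₂).leadingCoeff = u.leadingCoeff * Q₂.leadingCoeff ^ n :=
      leadingCoeff_comp (by omega)
    have h3 : u.leadingCoeff * Q₁.leadingCoeff ^ n = u.leadingCoeff * Q₂.leadingCoeff ^ n := by
      rw [← h1, ← h2, h]
    exact mul_left_cancel₀ hu0 h3
  have hζn : ζ ^ n = 1 := by
    rw [hζ, div_pow, ← hpow, div_self (pow_ne_zero _ hl₁)]
  set R := Q₂ - C ζ * Q₁ with hR
  by_cases hR0 : R = 0
  · refine ⟨ζ, 0, hζ0, ?_⟩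
    rw [map_zero, add_zero, ← sub_eq_zero]
    exact hR0
  suffices hdR : R.natDegree = 0 by
    refine ⟨ζ, R.coeff 0, hζ0, ?_⟩
    have hRC := Polynomial.eq_C_of_natDegree_eq_zero hdR
    have h4 : C ζ * Q₁ + C (R.coeff 0) = C ζ * Q₁ + R := by rw [← hRC]
    rw [h4, hR]; ring
  by_contra hdR0
  have hdRpos : 0 < R.natDegree := Nat.pos_of_ne_zero hdR0
  set Y := C ζ * Q₁ with hY
  have hYdeg : Y.natDegree = w := by rw [hY, natDegree_C_mul hζ0]
  have hYlc : Y.leadingCoeff = ζ * Q₁.leadingCoeff := by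
    rw [hY, leadingCoeff_mul, leadingCoeff_C]
  have hY0 : Y ≠ 0 := mul_ne_zero (by simpa using hζ0) hQ₁0
  have hRY : R = Q₂ - Y := by rw [hR, hY]
  have hcompsum : ∀ W : F[X], u.comp W = ∑ k ∈ Finset.range (n+1), C (u.coeff k) * W ^ k := by
    intro W
    rw [comp_eq_sum_left]
    exact Polynomial.sum_over_range' u (fun k => by rw [map_zero, zero_mul]) (n+1)
      (Nat.lt_succ_self _)
  set v := ∑ k ∈ Finset.range (n+1),
      C (u.coeff k) * (∑ i ∈ Finset.range k, Q₂ ^ i * Y ^ (k - 1 - i)) with hv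
  set E := ∑ k ∈ Finset.range (n+1), C (u.coeff k * (ζ ^ k - 1)) * Q₁ ^ k with hE
  have hA : u.comp Q₂ - u.comp Y = v * R := by
    rw [hcompsum, hcompsum, ← Finset.sum_sub_distrib, hv, Finset.sum_mul]
    refine Finset.sum_congr rfl fun k _ => ?_
    have hg := geom_sum₂_mul Q₂ Y k
    rw [hRY, mul_assoc, hg]
    ring
  have hB : u.comp Y - u.comp Q₁ = E := by
    rw [hcompsum, hcompsum, ← Finset.sum_sub_distrib, hE]
    refine Finset.sum_congr rfl fun k _ => ?_
    have h1 : Y ^ k = C (ζ ^ k) * Q₁ ^ k := by rw [hY, mul_pow, C_pow]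
    have h2 : C (u.coeff k * (ζ ^ k - 1)) = C (u.coeff k) * C (ζ ^ k) - C (u.coeff k) := by
      rw [mul_sub, mul_one, map_sub, map_mul]
    rw [h1, h2]
    ring
  have hmain : v * R = -E := by
    have h0 : (v * R) + E = 0 := by
      rw [← hA, ← hB, h]; ring
    exact eq_neg_of_add_eq_zero_left h0
  set d := (n - 1) * w with hd
  -- degree bound for E
  have hEdeg : E.natDegree ≤ d := by
    refine natDegree_sum_le_of_forall_le _ _ fun k hk => ?_
    have hkn : k ≤ n := Finset.mem_range_succ_iff.mp hk
    rcases eq_or_lt_of_le hkn with hkeq | hklt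
    · have hz : ζ ^ k - 1 = 0 := by rw [hkeq, hζn, sub_self]
      rw [hz, mul_zero, map_zero, zero_mul, natDegree_zero]
      exact Nat.zero_le _
    · calc (C (u.coeff k * (ζ ^ k - 1)) * Q₁ ^ k).natDegree
          ≤ (C (u.coeff k * (ζ ^ k - 1))).natDegree + (Q₁ ^ k).natDegree := natDegree_mul_le
        _ ≤ 0 + k * w := by
            refine add_le_add (natDegree_C _).le ?_
            rw [natDegree_pow, ← hw]
        _ ≤ d := by
            rw [zero_add, hd]
            exact Nat.mul_le_mul_right _ (by omega)
  -- coefficient of v at degree d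
  have hQ₂deg : Q₂.natDegree = w := hdeg
  have hinner : ∀ i ∈ Finset.range n, (Q₂ ^ i * Y ^ (n - 1 - i)).coeff d
      = (ζ * Q₁.leadingCoeff) ^ (n - 1) := by
    intro i hi
    have hi' : i ≤ n - 1 := by have := Finset.mem_range.mp hi; omega
    have h1 : (Q₂ ^ i).natDegree = i * w := by rw [natDegree_pow, hQ₂deg]
    have h2 : (Y ^ (n - 1 - i)).natDegree = (n - 1 - i) * w := by rw [natDegree_pow, hYdeg]
    have hdd : d = (Q₂ ^ i).natDegree + (Y ^ (n - 1 - i)).natDegree := by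
      rw [h1, h2, ← add_mul, hd]
      congr 1
      omega
    rw [hdd, coeff_mul_degree_add_degree, leadingCoeff_pow, leadingCoeff_pow, hl2eq, hYlc,
      ← pow_add]
    congr 1
    omega
  have hvcoeff : v.coeff d = u.leadingCoeff * ((n : F) * (ζ * Q₁.leadingCoeff) ^ (n - 1)) := by
    rw [hv, finset_sum_coeff]
    rw [Finset.sum_eq_single n]
    · rw [coeff_C_mul, finset_sum_coeff, Finset.sum_congr rfl hinner, Finset.sum_const,
        Finset.card_range, nsmul_eq_mul]
      rw [coeff_natDegree]
    · intro k hk hkn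
      have hkn' : k < n := by
        have := Finset.mem_range_succ_iff.mp hk
        omega
      rw [coeff_C_mul]
      rcases Nat.eq_zero_or_pos k with hk0 | hkpos
      · rw [hk0]
        simp
      · have hS : (∑ i ∈ Finset.range k, Q₂ ^ i * Y ^ (k - 1 - i)).natDegree < d := by
          have hle : (∑ i ∈ Finset.range k, Q₂ ^ i * Y ^ (k - 1 - i)).natDegree
              ≤ (k - 1) * w := by
            refine natDegree_sum_le_of_forall_le _ _ fun i hi => ?_
            have hik : i < k := Finset.mem_range.mp hi
            calc (Q₂ ^ i * Y ^ (k - 1 - i)).natDegree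
                ≤ (Q₂ ^ i).natDegree + (Y ^ (k - 1 - i)).natDegree := natDegree_mul_le
              _ = i * w + (k - 1 - i) * w := by rw [natDegree_pow, natDegree_pow, hQ₂deg, hYdeg]
              _ = (i + (k - 1 - i)) * w := by rw [add_mul]
              _ ≤ (k - 1) * w := Nat.mul_le_mul_right _ (by omega)
          have : (k - 1) * w < d := by
            rw [hd]
            have : k - 1 < n - 1 := by omega
            exact Nat.mul_lt_mul_of_lt_of_le this le_rfl hwpos
          omega
        rw [coeff_eq_zero_of_natDegree_lt hS, mul_zero]
    · intro hnn
      exact absurd (Finset.self_mem_range_succ n) hnn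
  have hvne : v.coeff d ≠ 0 := by
    rw [hvcoeff]
    refine mul_ne_zero hu0 (mul_ne_zero ?_ (pow_ne_zero _ (mul_ne_zero hζ0 hl₁)))
    exact Nat.cast_ne_zero.mpr hu.ne'
  have hv0 : v ≠ 0 := fun h0 => hvne (by rw [h0, coeff_zero])
  have hvle : v.natDegree ≤ d := by
    refine natDegree_sum_le_of_forall_le _ _ fun k hk => ?_
    have hkn : k ≤ n := Finset.mem_range_succ_iff.mp hk
    calc (C (u.coeff k) * (∑ i ∈ Finset.range k, Q₂ ^ i * Y ^ (k - 1 - i))).natDegree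
        ≤ (C (u.coeff k)).natDegree
          + (∑ i ∈ Finset.range k, Q₂ ^ i * Y ^ (k - 1 - i)).natDegree := natDegree_mul_le
      _ ≤ 0 + d := by
          refine add_le_add (natDegree_C _).le ?_
          refine natDegree_sum_le_of_forall_le _ _ fun i hi => ?_
          have hik : i < k := Finset.mem_range.mp hi
          calc (Q₂ ^ i * Y ^ (k - 1 - i)).natDegree
              ≤ (Q₂ ^ i).natDegree + (Y ^ (k - 1 - i)).natDegree := natDegree_mul_le
            _ = (i + (k - 1 - i)) * w := by
                rw [natDegree_pow, natDegree_pow, hQ₂deg, hYdeg, add_mul]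
            _ ≤ d := by
                rw [hd]
                exact Nat.mul_le_mul_right _ (by omega)
      _ = d := by
          rw [zero_add]
  have hvdeg : v.natDegree = d := le_antisymm hvle (le_natDegree_of_ne_zero hvne)
  have hfinal := congrArg natDegree hmain
  rw [natDegree_mul hv0 hR0, natDegree_neg, hvdeg] at hfinal
  have : d + R.natDegree ≤ d := by rw [hfinal]; exact hEdeg
  omega




private theorem exists_critval_poly (q : ℚ[X]) (hq : 0 < q.natDegree) :
    ∃ D : ℚ[X], D ≠ 0 ∧ D.natDegree < q.natDegree ∧
      ∀ ρ : K, (q.derivative.map φ).eval ρ = 0 → (D.map φ).eval ((q.map φ).eval ρ) = 0 := by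
  have hd0 : q.derivative ≠ 0 := derivative_ne_zero_of_natDegree_pos' hq
  set g := q.derivative with hg
  letI : Module.Finite ℚ (AdjoinRoot g) := Module.Finite.of_basis (AdjoinRoot.powerBasis hd0).basis
  letI : Module.Free ℚ (AdjoinRoot g) := Module.Free.of_basis (AdjoinRoot.powerBasis hd0).basis
  set z : AdjoinRoot g := AdjoinRoot.mk g q with hz
  set M : Module.End ℚ (AdjoinRoot g) := Algebra.lmul ℚ (AdjoinRoot g) z with hM
  set D := LinearMap.charpoly M with hD
  have hmonic : D.Monic := LinearMap.charpoly_monic M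
  refine ⟨D, hmonic.ne_zero, ?_, ?_⟩
  · rw [hD, LinearMap.charpoly_natDegree]
    have h1 : Module.finrank ℚ (AdjoinRoot g) = g.natDegree := by
      rw [(AdjoinRoot.powerBasis hd0).finrank, AdjoinRoot.powerBasis_dim]
    rw [h1]
    calc g.natDegree ≤ q.natDegree - 1 := natDegree_derivative_le q
      _ < q.natDegree := by omega
  · intro ρ hρ
    have hCH : Polynomial.aeval M D = 0 := LinearMap.aeval_self_charpoly M
    have hz0 : Polynomial.aeval z D = 0 := by
      have h1 : Polynomial.aeval M D
          = Algebra.lmul ℚ (AdjoinRoot g) (Polynomial.aeval z D) := by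
        rw [hM]
        exact Polynomial.aeval_algHom_apply (Algebra.lmul ℚ (AdjoinRoot g)) z D
      rw [hCH] at h1
      replace h1 := h1.symm
      have h2 := congrFun (congrArg DFunLike.coe h1) 1
      simpa using h2
    have hev : g.eval₂ φ ρ = 0 := by rw [← Polynomial.eval_map]; exact hρ
    set ε : AdjoinRoot g →+* K := AdjoinRoot.lift φ ρ hev with hε
    have h3 : ε (Polynomial.aeval z D) = 0 := by rw [hz0, map_zero]
    rw [Polynomial.aeval_def, Polynomial.hom_eval₂] at h3
    have h4 : ε.comp (algebraMap ℚ (AdjoinRoot g)) = φ := Subsingleton.elim _ _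
    rw [h4] at h3
    have h5 : ε z = (q.map φ).eval ρ := by
      rw [hz, hε, AdjoinRoot.lift_mk, ← Polynomial.eval_map]
    rw [h5] at h3
    rw [← Polynomial.eval_map] at h3
    exact h3

private lemma phi_inj : Function.Injective φ := φ.injective

private lemma belyi_const (q : ℚ[X]) (hq : q ≠ 0) (h0 : q.natDegree = 0) :
    ∃ G : ℚ[X], 0 < G.natDegree ∧
      (∀ y : K, (q.map φ).eval y = 0 → ∃ r : ℚ, (G.map φ).eval y = φ r) ∧
      (∀ y : K, ((G.map φ).derivative).eval y = 0 → ∃ r : ℚ, (G.map φ).eval y = φ r) := by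
  refine ⟨X, by simp, ?_, ?_⟩
  · intro y hy
    exfalso
    have hqc : q = C (q.coeff 0) := eq_C_of_natDegree_eq_zero h0
    rw [hqc, map_C, eval_C] at hy
    have hc0 : q.coeff 0 ≠ 0 := fun hc => hq (by rw [hqc, hc, map_zero])
    exact hc0 (phi_inj (by rw [hy, map_zero]))
  · intro y hy
    exfalso
    rw [Polynomial.map_X, derivative_X, eval_one] at hy
    exact one_ne_zero hy

private theorem belyi_main : ∀ (d : ℕ) (q : ℚ[X]), q ≠ 0 → q.natDegree ≤ d →
    ∃ G : ℚ[X], 0 < G.natDegree ∧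
      (∀ y : K, (q.map φ).eval y = 0 → ∃ r : ℚ, (G.map φ).eval y = φ r) ∧
      (∀ y : K, ((G.map φ).derivative).eval y = 0 → ∃ r : ℚ, (G.map φ).eval y = φ r) := by
  intro d
  induction d with
  | zero => exact fun q hq hd => belyi_const q hq (Nat.le_zero.mp hd)
  | succ d IH =>
    intro q hq hd
    rcases Nat.eq_zero_or_pos q.natDegree with h0 | hpos
    · exact belyi_const q hq h0
    obtain ⟨D, hD0, hDdeg, hDvan⟩ := exists_critval_poly q hpos
    obtain ⟨G', hG'deg, hG'a, hG'b⟩ := IH D hD0 (by omega)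
    have hcomp : ((G'.comp q).map φ) = (G'.map φ).comp (q.map φ) := Polynomial.map_comp _ _ _
    refine ⟨G'.comp q, ?_, ?_, ?_⟩
    · rw [natDegree_comp]
      exact Nat.mul_pos hG'deg hpos
    · intro y hy
      rw [hcomp, eval_comp, hy]
      refine ⟨G'.eval 0, ?_⟩
      have h00 : (0 : K) = φ 0 := by rw [map_zero]
      rw [h00, Polynomial.eval_map, Polynomial.eval₂_at_apply]
    · intro y hy
      rw [hcomp, derivative_comp, eval_mul] at hy
      rw [hcomp, eval_comp]
      rcases mul_eq_zero.mp hy with h1 | h2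
      · have h1' : (q.derivative.map φ).eval y = 0 := by
          rw [derivative_map] at h1; exact h1
        exact hG'a _ (hDvan y h1')
      · rw [eval_comp] at h2
        exact hG'b _ h2




private lemma eval_map_phi (p : ℚ[X]) (r : ℚ) : (p.map φ).eval (φ r) = φ (p.eval r) := by
  rw [Polynomial.eval_map, Polynomial.eval₂_at_apply]

/-- The Belyi crushing polynomial `p_{a,b}`. -/
private def pab (a b : ℕ) : ℚ[X] :=
  C (((a : ℚ) + (b : ℚ)) ^ (a + b) / ((a : ℚ) ^ a * (b : ℚ) ^ b)) * (X ^ a * (1 - X) ^ b)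

private lemma pabC_ne (a b : ℕ) (ha : 0 < a) (hb : 0 < b) :
    ((a : ℚ) + (b : ℚ)) ^ (a + b) / ((a : ℚ) ^ a * (b : ℚ) ^ b) ≠ 0 := by
  have ha' : (a : ℚ) ≠ 0 := Nat.cast_ne_zero.mpr ha.ne'
  have hb' : (b : ℚ) ≠ 0 := Nat.cast_ne_zero.mpr hb.ne'
  have hab : ((a : ℚ) + (b : ℚ)) ≠ 0 := by positivity
  positivity

private lemma pab_natDegree (a b : ℕ) (ha : 0 < a) (hb : 0 < b) :
    (pab a b).natDegree = a + b := by
  unfold pab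
  rw [natDegree_C_mul (pabC_ne a b ha hb), natDegree_mul (pow_ne_zero _ X_ne_zero)
    (pow_ne_zero _ (by intro h0; simpa using congrArg (Polynomial.eval 0) h0)),
    natDegree_pow, natDegree_pow, natDegree_X]
  have h1 : (1 - X : ℚ[X]).natDegree = 1 := by
    have : (1 - X : ℚ[X]) = -(X - C 1) := by rw [C_1]; ring
    rw [this, natDegree_neg, natDegree_X_sub_C]
  rw [h1]
  ring

private lemma pab_eval_zero (a b : ℕ) (ha : 0 < a) : (pab a b).eval 0 = 0 := by
  unfold pab
  simp [zero_pow ha.ne']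

private lemma pab_eval_one (a b : ℕ) (hb : 0 < b) : (pab a b).eval 1 = 0 := by
  unfold pab
  simp [zero_pow hb.ne']

private lemma pab_eval_s (a b : ℕ) (ha : 0 < a) (hb : 0 < b) :
    (pab a b).eval ((a : ℚ) / ((a : ℚ) + (b : ℚ))) = 1 := by
  have ha' : (a : ℚ) ≠ 0 := Nat.cast_ne_zero.mpr ha.ne'
  have hb' : (b : ℚ) ≠ 0 := Nat.cast_ne_zero.mpr hb.ne'
  have hab : ((a : ℚ) + (b : ℚ)) ≠ 0 := by positivity
  unfold pab
  simp only [eval_mul, eval_C, eval_pow, eval_sub, eval_one, eval_X]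
  have h1 : 1 - (a : ℚ) / ((a : ℚ) + (b : ℚ)) = (b : ℚ) / ((a : ℚ) + (b : ℚ)) := by
    field_simp
    ring
  rw [h1, div_pow, div_pow, pow_add]
  field_simp

private lemma pab_derivative (a' b' : ℕ) :
    (pab (a' + 1) (b' + 1)).derivative
      = C ((((a' + 1 : ℕ) : ℚ) + ((b' + 1 : ℕ) : ℚ)) ^ ((a' + 1) + (b' + 1))
            / (((a' + 1 : ℕ) : ℚ) ^ (a' + 1) * ((b' + 1 : ℕ) : ℚ) ^ (b' + 1)))
        * (X ^ a' * (1 - X) ^ b'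
            * (C ((a' : ℚ) + 1) - C (((a' : ℚ) + 1) + ((b' : ℚ) + 1)) * X)) := by
  have hf : derivative (X ^ (a' + 1) : ℚ[X]) = C ((a' : ℚ) + 1) * X ^ a' := by
    rw [derivative_X_pow, Nat.add_sub_cancel]
    push_cast
    ring
  have hg : derivative ((1 - X : ℚ[X]) ^ (b' + 1)) = -(C ((b' : ℚ) + 1) * (1 - X) ^ b') := by
    rw [derivative_pow, derivative_sub, derivative_one, derivative_X, Nat.add_sub_cancel]
    push_cast
    ring
  unfold pab
  rw [derivative_C_mul, derivative_mul, hf, hg]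
  simp only [map_add, map_one]
  ring

private lemma pab_cv (a b : ℕ) (ha : 0 < a) (hb : 0 < b) :
    ∀ y : K, (((pab a b).map φ).derivative).eval y = 0 →
      ((pab a b).map φ).eval y = 0 ∨ ((pab a b).map φ).eval y = 1 := by
  obtain ⟨a', rfl⟩ : ∃ a', a = a' + 1 := ⟨a - 1, by omega⟩
  obtain ⟨b', rfl⟩ : ∃ b', b = b' + 1 := ⟨b - 1, by omega⟩
  intro y hy
  rw [derivative_map, pab_derivative] at hy
  simp only [Polynomial.map_mul, Polynomial.map_pow, Polynomial.map_sub, Polynomial.map_one,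
    Polynomial.map_C, Polynomial.map_X, eval_mul, eval_pow, eval_sub, eval_one, eval_X,
    eval_C] at hy
  rcases mul_eq_zero.mp hy with hy | hy'
  · exact absurd ((_root_.map_eq_zero φ).mp hy) (pabC_ne _ _ ha hb)
  rcases mul_eq_zero.mp hy' with hy | hy
  · rcases mul_eq_zero.mp hy with hy | hy
    · -- y ^ a' = 0 : y = 0
      have hy0 : y = 0 := by
        rcases Nat.eq_zero_or_pos a' with h0 | hpos
        · rw [h0, pow_zero] at hy; exact absurd hy one_ne_zero
        · exact pow_eq_zero_iff hpos.ne' |>.mp hy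
      left
      rw [hy0, show (0 : K) = φ 0 from (map_zero φ).symm, eval_map_phi,
        pab_eval_zero _ _ ha, map_zero]
    · -- (1 - y) ^ b' = 0 : y = 1
      have hy1 : y = 1 := by
        rcases Nat.eq_zero_or_pos b' with h0 | hpos
        · rw [h0, pow_zero] at hy; exact absurd hy one_ne_zero
        · have := pow_eq_zero_iff hpos.ne' |>.mp hy
          linear_combination -this
      left
      rw [hy1, show (1 : K) = φ 1 from (map_one φ).symm, eval_map_phi,
        pab_eval_one _ _ hb, map_zero]
  · -- linear factor vanishes : y = φ (a/(a+b))
    have hden : φ (((a' : ℚ) + 1) + ((b' : ℚ) + 1)) ≠ 0 := by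
      intro h0
      have h0' := (_root_.map_eq_zero φ).mp h0
      have hpos : (0 : ℚ) < ((a' : ℚ) + 1) + ((b' : ℚ) + 1) := by positivity
      exact hpos.ne' h0'
    have hyv : y = φ (((a' : ℚ) + 1) / (((a' : ℚ) + 1) + ((b' : ℚ) + 1))) := by
      rw [map_div₀, eq_div_iff hden]
      rw [sub_eq_zero] at hy
      linear_combination -hy
    right
    have hs : (((a' + 1 : ℕ) : ℚ)) / (((a' + 1 : ℕ) : ℚ) + ((b' + 1 : ℕ) : ℚ))
        = ((a' : ℚ) + 1) / (((a' : ℚ) + 1) + ((b' : ℚ) + 1)) := by push_cast; ring_nf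
    rw [hyv, eval_map_phi, ← hs, pab_eval_s _ _ (by omega) (by omega), map_one]



private lemma natDegree_one_sub_X : (1 - X : ℚ[X]).natDegree = 1 := by
  have h : (1 - X : ℚ[X]) = -(X - C 1) := by rw [C_1]; ring
  rw [h, natDegree_neg, natDegree_X_sub_C]

private def IsGadget (g : ℚ[X]) (t : ℚ) : Prop :=
  0 < g.natDegree ∧ (g.eval 0 = 0 ∨ g.eval 0 = 1) ∧ (g.eval 1 = 0 ∨ g.eval 1 = 1) ∧
  (g.eval t = 0 ∨ g.eval t = 1) ∧
  ∀ y : K, ((g.map φ).derivative).eval y = 0 → (g.map φ).eval y = 0 ∨ (g.map φ).eval y = 1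

private lemma exists_ab (s : ℚ) (h0 : 0 < s) (h1 : s < 1) :
    ∃ a b : ℕ, 0 < a ∧ 0 < b ∧ (a : ℚ) / ((a : ℚ) + (b : ℚ)) = s := by
  have hnum : 0 < s.num := Rat.num_pos.mpr h0
  have hden : (0 : ℚ) < (s.den : ℚ) := by exact_mod_cast s.pos
  have hlt : (s.num : ℚ) < (s.den : ℚ) := by
    have hh := Rat.num_div_den s
    rw [← hh] at h1
    exact_mod_cast (div_lt_one hden).mp h1
  have hltZ : s.num < (s.den : ℤ) := by exact_mod_cast hlt
  have hltn : s.num.toNat < s.den := by omega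
  have hnn : 0 < s.num.toNat := by omega
  refine ⟨s.num.toNat, s.den - s.num.toNat, hnn, by omega, ?_⟩
  have ha : ((s.num.toNat : ℕ) : ℚ) = (s.num : ℚ) := by
    have := Int.toNat_of_nonneg hnum.le
    exact_mod_cast congrArg (Int.cast : ℤ → ℚ) this
  have hab : ((s.num.toNat : ℕ) : ℚ) + (((s.den - s.num.toNat : ℕ)) : ℚ) = (s.den : ℚ) := by
    rw [Nat.cast_sub hltn.le]
    ring
  rw [hab, ha, Rat.num_div_den]

private lemma gadget_small (t : ℚ) (h0 : 0 < t) (h1 : t < 1) : ∃ g : ℚ[X], IsGadget g t := by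
  obtain ⟨a, b, ha, hb, hs⟩ := exists_ab t h0 h1
  refine ⟨pab a b, ?_, ?_, ?_, ?_, pab_cv a b ha hb⟩
  · rw [pab_natDegree a b ha hb]; omega
  · exact Or.inl (pab_eval_zero a b ha)
  · exact Or.inl (pab_eval_one a b hb)
  · right; rw [← hs]; exact pab_eval_s a b ha hb

private lemma gadget_big (t : ℚ) (h1 : 1 < t) : ∃ g : ℚ[X], IsGadget g t := by
  have ht0 : t ≠ 0 := by positivity
  have hti : t⁻¹ ≠ 0 := inv_ne_zero ht0
  have h0' : 0 < t⁻¹ := by positivity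
  have h1' : t⁻¹ < 1 := by
    rw [inv_lt_one_iff₀]
    right; exact h1
  obtain ⟨a, b, ha, hb, hs⟩ := exists_ab t⁻¹ h0' h1'
  refine ⟨(pab a b).comp (C t⁻¹ * X), ?_, ?_, ?_, ?_, ?_⟩
  · rw [natDegree_comp, pab_natDegree a b ha hb, natDegree_C_mul hti, natDegree_X]
    omega
  · left
    rw [eval_comp, eval_mul, eval_C, eval_X, mul_zero]
    exact pab_eval_zero a b ha
  · right
    rw [eval_comp, eval_mul, eval_C, eval_X, mul_one, ← hs]
    exact pab_eval_s a b ha hb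
  · left
    rw [eval_comp, eval_mul, eval_C, eval_X, inv_mul_cancel₀ ht0]
    exact pab_eval_one a b hb
  · intro y hy
    have hmap : ((pab a b).comp (C t⁻¹ * X)).map φ
        = ((pab a b).map φ).comp (C (φ t⁻¹) * X) := by
      rw [Polynomial.map_comp, Polynomial.map_mul, Polynomial.map_C, Polynomial.map_X]
    rw [hmap, derivative_comp, eval_mul] at hy
    rw [hmap, eval_comp, eval_mul, eval_C, eval_X]
    have hder : (C (φ t⁻¹) * X : K[X]).derivative = C (φ t⁻¹) := by
      rw [derivative_C_mul, derivative_X, mul_one]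
    rw [hder, eval_C] at hy
    have hφ : φ t⁻¹ ≠ 0 := fun hφ0 => hti ((_root_.map_eq_zero φ).mp hφ0)
    rcases mul_eq_zero.mp hy with hA | hB
    · exact absurd hA hφ
    · rw [eval_comp, eval_mul, eval_C, eval_X] at hB
      exact pab_cv a b ha hb _ hB

private lemma gadget (t : ℚ) (ht0 : t ≠ 0) (ht1 : t ≠ 1) : ∃ g : ℚ[X], IsGadget g t := by
  rcases lt_trichotomy t 0 with hneg | hz | hpos
  · -- t < 0 : compose with 1 - X
    have h1' : 1 < 1 - t := by linarith
    obtain ⟨g', hd, h0, h1, ht, hcv⟩ := gadget_big (1 - t) h1'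
    refine ⟨g'.comp (1 - X), ?_, ?_, ?_, ?_, ?_⟩
    · rw [natDegree_comp, natDegree_one_sub_X]
      omega
    · rw [eval_comp, eval_sub, eval_one, eval_X, sub_zero]
      exact h1
    · rw [eval_comp, eval_sub, eval_one, eval_X, sub_self]
      exact h0
    · rw [eval_comp, eval_sub, eval_one, eval_X]
      exact ht
    · intro y hy
      have hmap : (g'.comp (1 - X)).map φ = (g'.map φ).comp (1 - X) := by
        rw [Polynomial.map_comp, Polynomial.map_sub, Polynomial.map_one, Polynomial.map_X]
      rw [hmap, derivative_comp, eval_mul] at hy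
      rw [hmap, eval_comp, eval_sub, eval_one, eval_X]
      have hder : (1 - X : K[X]).derivative = -1 := by
        rw [derivative_sub, derivative_one, derivative_X, zero_sub]
      rw [hder] at hy
      rcases mul_eq_zero.mp hy with hA | hB
      · rw [eval_neg, eval_one, neg_eq_zero] at hA
        exact absurd hA one_ne_zero
      · rw [eval_comp, eval_sub, eval_one, eval_X] at hB
        exact hcv _ hB
  · exact absurd hz ht0
  · rcases lt_trichotomy t 1 with hlt | he | hgt
    · exact gadget_small t hpos hlt
    · exact absurd he ht1
    · exact gadget_big t hgt

private theorem crush : ∀ (n : ℕ) (T : Finset ℚ),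
    (T.filter (fun t => t ≠ 0 ∧ t ≠ 1)).card ≤ n →
    ∃ Cr : ℚ[X], 0 < Cr.natDegree ∧
      (∀ t ∈ T, Cr.eval t = 0 ∨ Cr.eval t = 1) ∧
      (Cr.eval 0 = 0 ∨ Cr.eval 0 = 1) ∧ (Cr.eval 1 = 0 ∨ Cr.eval 1 = 1) ∧
      (∀ y : K, ((Cr.map φ).derivative).eval y = 0 →
        (Cr.map φ).eval y = 0 ∨ (Cr.map φ).eval y = 1) := by
  intro n
  induction n with
  | zero =>
    intro T hT
    refine ⟨X, by simp, ?_, Or.inl (by simp), Or.inr (by simp), ?_⟩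
    · intro t ht
      have hnP : ¬(t ≠ 0 ∧ t ≠ 1) := by
        intro hP
        have hmem : t ∈ T.filter (fun t => t ≠ 0 ∧ t ≠ 1) := Finset.mem_filter.mpr ⟨ht, hP⟩
        have := Finset.card_pos.mpr ⟨t, hmem⟩
        omega
      rw [eval_X]
      by_cases h : t = 0
      · exact Or.inl h
      · right
        by_contra h1
        exact hnP ⟨h, h1⟩
    · intro y hy
      exfalso
      rw [Polynomial.map_X, derivative_X, eval_one] at hy
      exact one_ne_zero hy
  | succ n IH =>
    intro T hT
    by_cases hex : ∃ t ∈ T, t ≠ 0 ∧ t ≠ 1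
    · obtain ⟨t₀, ht₀T, ht₀⟩ := hex
      obtain ⟨g, hgdeg, hg0, hg1, hgt, hgcv⟩ := gadget t₀ ht₀.1 ht₀.2
      set T' := T.image g.eval with hT'
      have ht₀mem : t₀ ∈ T.filter (fun t => t ≠ 0 ∧ t ≠ 1) := Finset.mem_filter.mpr ⟨ht₀T, ht₀⟩
      have hcard : (T'.filter (fun t => t ≠ 0 ∧ t ≠ 1)).card ≤ n := by
        have hsub : T'.filter (fun t => t ≠ 0 ∧ t ≠ 1)
            ⊆ ((T.filter (fun t => t ≠ 0 ∧ t ≠ 1)).erase t₀).image g.eval := by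
          intro x hx
          obtain ⟨hxT', hxP⟩ := Finset.mem_filter.mp hx
          obtain ⟨s, hsT, hsx⟩ := Finset.mem_image.mp hxT'
          refine Finset.mem_image.mpr ⟨s, ?_, hsx⟩
          refine Finset.mem_erase.mpr ⟨?_, Finset.mem_filter.mpr ⟨hsT, ?_, ?_⟩⟩
          · rintro rfl
            rcases hgt with h | h <;> rw [hsx] at h
            · exact hxP.1 h
            · exact hxP.2 h
          · rintro rfl
            rcases hg0 with h | h <;> rw [hsx] at h
            · exact hxP.1 h
            · exact hxP.2 h
          · rintro rfl
            rcases hg1 with h | h <;> rw [hsx] at h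
            · exact hxP.1 h
            · exact hxP.2 h
        calc (T'.filter (fun t => t ≠ 0 ∧ t ≠ 1)).card
            ≤ (((T.filter (fun t => t ≠ 0 ∧ t ≠ 1)).erase t₀).image g.eval).card :=
              Finset.card_le_card hsub
          _ ≤ ((T.filter (fun t => t ≠ 0 ∧ t ≠ 1)).erase t₀).card := Finset.card_image_le
          _ = (T.filter (fun t => t ≠ 0 ∧ t ≠ 1)).card - 1 :=
              Finset.card_erase_of_mem ht₀mem
          _ ≤ n := by omega
      obtain ⟨Cr', h1, h2, h3, h4, h5⟩ := IH T' hcard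
      have hmc : ((Cr'.comp g).map φ) = (Cr'.map φ).comp (g.map φ) := Polynomial.map_comp _ _ _
      refine ⟨Cr'.comp g, ?_, ?_, ?_, ?_, ?_⟩
      · rw [natDegree_comp]
        exact Nat.mul_pos h1 hgdeg
      · intro t ht
        rw [eval_comp]
        exact h2 _ (Finset.mem_image_of_mem _ ht)
      · rw [eval_comp]
        rcases hg0 with h | h <;> rw [h]
        exacts [h3, h4]
      · rw [eval_comp]
        rcases hg1 with h | h <;> rw [h]
        exacts [h3, h4]
      · intro y hy
        rw [hmc, derivative_comp, eval_mul] at hy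
        rw [hmc, eval_comp]
        rcases mul_eq_zero.mp hy with hA | hB
        · have he0 : ((Cr'.map φ).eval (0 : K)) = φ (Cr'.eval 0) := by
            rw [show (0 : K) = φ 0 from (map_zero φ).symm, eval_map_phi]
          have he1 : ((Cr'.map φ).eval (1 : K)) = φ (Cr'.eval 1) := by
            rw [show (1 : K) = φ 1 from (map_one φ).symm, eval_map_phi]
          rcases hgcv y hA with h | h <;> rw [h]
          · rw [he0]
            rcases h3 with h' | h' <;> rw [h']
            · exact Or.inl (map_zero φ)
            · exact Or.inr (map_one φ)
          · rw [he1]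
            rcases h4 with h' | h' <;> rw [h']
            · exact Or.inl (map_zero φ)
            · exact Or.inr (map_one φ)
        · rw [eval_comp] at hB
          exact h5 _ hB
    · push_neg at hex
      have hempty : (T.filter (fun t => t ≠ 0 ∧ t ≠ 1)).card ≤ n := by
        have : T.filter (fun t => t ≠ 0 ∧ t ≠ 1) = ∅ := by
          refine Finset.filter_eq_empty_iff.mpr ?_
          intro t ht hP
          exact hP.2 (hex t ht hP.1)
        rw [this, Finset.card_empty]
        omega
      exact IH T hempty



/-! ### The master construction -/

private theorem master (α : K) (hα0 : α ≠ 0) (hα1 : α ≠ 1) :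
    ∃ (Bq : ℚ[X]) (P F : K[X]),
      0 < Bq.natDegree ∧
      P.derivative = X * (X - C 1) ^ 2 * (X - C α) ^ 3 ∧
      F = C 2 * ((Bq.map φ).comp P) - C 1 ∧
      0 < F.natDegree ∧
      (∀ y : K, F.derivative.eval y = 0 → F.eval y = -1 ∨ F.eval y = 1) := by
  classical
  set pcrit : K[X] := X * (X - C 1) ^ 2 * (X - C α) ^ 3 with hpcrit
  have hpcrit_monic : pcrit.Monic := by
    exact (monic_X.mul ((monic_X_sub_C 1).pow 2)).mul ((monic_X_sub_C α).pow 3)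
  have hpcrit0 : pcrit ≠ 0 := hpcrit_monic.ne_zero
  set P : K[X] := antider pcrit with hPdef
  have hP : P.derivative = pcrit := derivative_antider pcrit
  set v₁ := P.eval 0 with hv₁
  set v₂ := P.eval 1 with hv₂
  set v₃ := P.eval α with hv₃
  have hint : ∀ v : K, IsIntegral ℚ v := fun v =>
    ((AlgebraicClosure.isAlgebraic ℚ).isAlgebraic v).isIntegral
  set mq : ℚ[X] := minpoly ℚ v₁ * (minpoly ℚ v₂ * minpoly ℚ v₃) with hmq
  have hmq0 : mq ≠ 0 :=
    mul_ne_zero (minpoly.ne_zero (hint v₁))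
      (mul_ne_zero (minpoly.ne_zero (hint v₂)) (minpoly.ne_zero (hint v₃)))
  have haev : ∀ v : K, ((minpoly ℚ v).map φ).eval v = 0 := fun v => by
    rw [Polynomial.eval_map]
    exact minpoly.aeval ℚ v
  have hmqv : ∀ i ∈ ({v₁, v₂, v₃} : Finset K), (mq.map φ).eval i = 0 := by
    intro i hi
    simp only [Finset.mem_insert, Finset.mem_singleton] at hi
    rw [hmq, Polynomial.map_mul, Polynomial.map_mul, eval_mul, eval_mul]
    rcases hi with rfl | rfl | rfl
    · rw [haev]; ring
    · rw [haev v₂]; ring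
    · rw [haev v₃]; ring
  obtain ⟨G, hGdeg, hGa, hGb⟩ := belyi_main mq.natDegree mq hmq0 le_rfl
  obtain ⟨r₁, hr₁⟩ := hGa v₁ (hmqv v₁ (by simp))
  obtain ⟨r₂, hr₂⟩ := hGa v₂ (hmqv v₂ (by simp))
  obtain ⟨r₃, hr₃⟩ := hGa v₃ (hmqv v₃ (by simp))
  have hGKd0 : (G.map φ).derivative ≠ 0 := by
    rw [derivative_map]
    exact Polynomial.map_ne_zero (derivative_ne_zero_of_natDegree_pos' hGdeg)
  set tfun : K → ℚ := fun y =>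
    if h : ∃ r : ℚ, (G.map φ).eval y = φ r then h.choose else 0 with htfun
  set T : Finset ℚ :=
    insert r₁ (insert r₂ (insert r₃ (((G.map φ).derivative.roots.toFinset).image tfun)))
    with hT
  obtain ⟨Cr, hCrdeg, hCrT, hCr0, hCr1, hCrcv⟩ := crush (T.filter (fun t => t ≠ 0 ∧ t ≠ 1)).card T le_rfl
  set Bq : ℚ[X] := Cr.comp G with hBq
  have hBdeg : 0 < Bq.natDegree := by
    rw [hBq, natDegree_comp]
    exact Nat.mul_pos hCrdeg hGdeg
  have hmc : (Bq.map φ) = (Cr.map φ).comp (G.map φ) := by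
    rw [hBq, Polynomial.map_comp]
  -- critical values of B are 0 or 1
  have hB1 : ∀ y : K, ((Bq.map φ).derivative).eval y = 0 →
      (Bq.map φ).eval y = 0 ∨ (Bq.map φ).eval y = 1 := by
    intro y hy
    rw [hmc, derivative_comp, eval_mul] at hy
    rw [hmc, eval_comp]
    rcases mul_eq_zero.mp hy with hA | hB
    · have hyroot : y ∈ ((G.map φ).derivative.roots.toFinset) := by
        rw [Multiset.mem_toFinset, mem_roots hGKd0]
        exact hA
      have hex : ∃ r : ℚ, (G.map φ).eval y = φ r := hGb y hA
      have htf : φ (tfun y) = (G.map φ).eval y := by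
        rw [htfun]
        simp only
        rw [dif_pos hex]
        exact hex.choose_spec.symm
      have hmemT : tfun y ∈ T := by
        rw [hT]
        refine Finset.mem_insert_of_mem (Finset.mem_insert_of_mem (Finset.mem_insert_of_mem ?_))
        exact Finset.mem_image_of_mem _ hyroot
      rw [← htf, eval_map_phi]
      rcases hCrT _ hmemT with h | h <;> rw [h]
      · exact Or.inl (map_zero φ)
      · exact Or.inr (map_one φ)
    · rw [eval_comp] at hB
      exact hCrcv _ hB
  -- values of B at the three critical values of P
  have hB2 : ∀ i ∈ ({v₁, v₂, v₃} : Finset K),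
      (Bq.map φ).eval i = 0 ∨ (Bq.map φ).eval i = 1 := by
    intro i hi
    simp only [Finset.mem_insert, Finset.mem_singleton] at hi
    have key : ∀ r : ℚ, r ∈ T → (G.map φ).eval i = φ r →
        (Bq.map φ).eval i = 0 ∨ (Bq.map φ).eval i = 1 := by
      intro r hrT hri
      rw [hmc, eval_comp, hri, eval_map_phi]
      rcases hCrT _ hrT with h | h <;> rw [h]
      · exact Or.inl (map_zero φ)
      · exact Or.inr (map_one φ)
    rcases hi with rfl | rfl | rfl
    · exact key r₁ (by rw [hT]; simp) hr₁
    · exact key r₂ (by rw [hT]; simp) hr₂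
    · exact key r₃ (by rw [hT]; simp) hr₃
  set F : K[X] := C 2 * ((Bq.map φ).comp P) - C 1 with hF
  have hFder : F.derivative = C 2 * (pcrit * (((Bq.map φ).derivative).comp P)) := by
    rw [hF, derivative_sub, derivative_C, sub_zero, derivative_C_mul, derivative_comp, hP]
  have htwo : (2 : K) ≠ 0 := two_ne_zero
  have hF1 : ∀ y : K, F.derivative.eval y = 0 → F.eval y = -1 ∨ F.eval y = 1 := by
    intro y hy
    rw [hFder, eval_mul, eval_mul, eval_C] at hy
    have hy' : pcrit.eval y * ((((Bq.map φ).derivative).comp P).eval y) = 0 :=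
      by
        rcases mul_eq_zero.mp hy with h | h
        · exact absurd h htwo
        · exact h
    have hBv : (Bq.map φ).eval (P.eval y) = 0 ∨ (Bq.map φ).eval (P.eval y) = 1 := by
      rcases mul_eq_zero.mp hy' with h | h
      · -- y is a critical point of P
        have hy3 : y = 0 ∨ y = 1 ∨ y = α := by
          rw [hpcrit] at h
          simp only [eval_mul, eval_pow, eval_sub, eval_X, eval_C] at h
          rcases mul_eq_zero.mp h with h' | h'
          · rcases mul_eq_zero.mp h' with h'' | h''
            · exact Or.inl h''
            · refine Or.inr (Or.inl ?_)
              have := pow_eq_zero_iff (by norm_num : (2:ℕ) ≠ 0) |>.mp h''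
              linear_combination this
          · refine Or.inr (Or.inr ?_)
            have := pow_eq_zero_iff (by norm_num : (3:ℕ) ≠ 0) |>.mp h'
            linear_combination this
        rcases hy3 with rfl | rfl | rfl
        · exact hB2 v₁ (by simp)
        · exact hB2 v₂ (by simp)
        · exact hB2 v₃ (by simp)
      · rw [eval_comp] at h
        exact hB1 _ h
    rw [hF, eval_sub, eval_mul, eval_C, eval_C, eval_comp]
    rcases hBv with h | h <;> rw [h]
    · left; ring
    · right; ring
  have hPnc : ∀ c : K, P ≠ C c := by
    intro c hc
    have : P.derivative = 0 := by rw [hc, derivative_C]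
    rw [hP] at this
    exact hpcrit0 this
  have hFd0 : F.derivative ≠ 0 := by
    rw [hFder]
    refine mul_ne_zero (by simpa using htwo) (mul_ne_zero hpcrit0 ?_)
    rw [Ne, Polynomial.comp_eq_zero_iff]
    push_neg
    constructor
    · rw [derivative_map]
      exact Polynomial.map_ne_zero (derivative_ne_zero_of_natDegree_pos' hBdeg)
    · intro _
      exact hPnc _
  have hFdeg : 0 < F.natDegree := natDegree_pos_of_derivative_ne_zero hFd0
  exact ⟨Bq, P, F, hBdeg, hP, hF, hFdeg, hF1⟩

end BiasedShabatAux

/-- The action of the absolute Galois group on biased Shabat polynomials is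
faithful: every nontrivial field automorphism `σ` of `Q̄` moves some biased
Shabat polynomial `f ∈ Q̄[z]`. -/
theorem galois_action_on_biased_shabat_faithful
    (σ : AlgebraicClosure ℚ ≃+* AlgebraicClosure ℚ)
    (hσ : σ ≠ RingEquiv.refl (AlgebraicClosure ℚ)) :
    ∃ f : Polynomial (AlgebraicClosure ℚ),
      f.eval 0 = 0 ∧ f.derivative.eval 0 = 1 ∧
      (∀ u : AlgebraicClosure ℚ,
        f.derivative.eval u = 0 → f.eval u = -1 ∨ f.eval u = 1) ∧
      f.map σ.toRingHom ≠ f := by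
  classical
  obtain ⟨α, hα⟩ : ∃ x : AlgebraicClosure ℚ, σ x ≠ x := by
    by_contra hc
    push_neg at hc
    exact hσ (RingEquiv.ext hc)
  have hσφ : ∀ r : ℚ, σ.toRingHom (BiasedShabatAux.φ r) = BiasedShabatAux.φ r := by
    intro r
    exact RingHom.congr_fun
      (Subsingleton.elim (σ.toRingHom.comp BiasedShabatAux.φ) BiasedShabatAux.φ) r
  have hαφ : ∀ r : ℚ, α ≠ BiasedShabatAux.φ r := by
    intro r hr
    apply hα
    rw [hr]
    exact hσφ r
  have hα0 : α ≠ 0 := fun h => hαφ 0 (by rw [h, map_zero])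
  have hα1 : α ≠ 1 := fun h => hαφ 1 (by rw [h, map_one])
  obtain ⟨Bq, P, F, hBdeg, hP, hF, hFdeg, hF1⟩ := BiasedShabatAux.master α hα0 hα1
  have hFne : F ≠ 0 := fun h => by simp [h] at hFdeg
  have hFdeg' : F.degree ≠ 0 := by
    rw [degree_eq_natDegree hFne]
    exact_mod_cast fun h => (by omega : F.natDegree ≠ 0) (by exact_mod_cast h)
  obtain ⟨z₀, hz₀⟩ := IsAlgClosed.exists_root F hFdeg'
  have hz₀' : F.eval z₀ = 0 := hz₀
  have hFz : F.derivative.eval z₀ ≠ 0 := by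
    intro h
    rcases hF1 z₀ h with h' | h' <;> rw [hz₀'] at h'
    · exact (by norm_num : (0 : AlgebraicClosure ℚ) ≠ -1) h'
    · exact (by norm_num : (0 : AlgebraicClosure ℚ) ≠ 1) h'
  set s := (F.derivative.eval z₀)⁻¹ with hsdef
  have hs0 : s ≠ 0 := inv_ne_zero hFz
  set A : Polynomial (AlgebraicClosure ℚ) := C s * X + C z₀ with hA
  have hAeval : ∀ u : AlgebraicClosure ℚ, A.eval u = s * u + z₀ := fun u => by
    rw [hA]; simp
  have hAder : A.derivative = C s := by
    rw [hA, derivative_add, derivative_C, add_zero, derivative_C_mul, derivative_X, mul_one]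
  refine ⟨F.comp A, ?_, ?_, ?_, ?_⟩
  · rw [eval_comp, hAeval, mul_zero, zero_add, hz₀']
  · rw [derivative_comp, eval_mul, hAder, eval_C, eval_comp, hAeval, mul_zero, zero_add, hsdef]
    exact inv_mul_cancel₀ hFz
  · intro u hu
    rw [derivative_comp, eval_mul, hAder, eval_C] at hu
    rcases mul_eq_zero.mp hu with h | h
    · exact absurd h hs0
    · rw [eval_comp] at h
      rw [eval_comp]
      exact hF1 _ h
  · -- the Galois contradiction
    intro hcon
    set W₁ := P.comp A with hW₁
    have hfW : F.comp A = C 2 * ((Bq.map BiasedShabatAux.φ).comp W₁) - C 1 := by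
      rw [hF, sub_comp, mul_comp, C_comp, C_comp, comp_assoc]
    have hBKσ : (Bq.map BiasedShabatAux.φ).map σ.toRingHom = Bq.map BiasedShabatAux.φ := by
      rw [Polynomial.map_map,
        Subsingleton.elim (σ.toRingHom.comp BiasedShabatAux.φ) BiasedShabatAux.φ]
    have hσ2 : σ.toRingHom (2 : AlgebraicClosure ℚ) = 2 := map_ofNat σ.toRingHom 2
    have hσ1 : σ.toRingHom (1 : AlgebraicClosure ℚ) = 1 := map_one σ.toRingHom
    set W₂ := W₁.map σ.toRingHom with hW₂
    have hmapσ : (F.comp A).map σ.toRingHom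
        = C 2 * ((Bq.map BiasedShabatAux.φ).comp W₂) - C 1 := by
      rw [hfW, Polynomial.map_sub, Polynomial.map_mul, Polynomial.map_comp, hBKσ,
        map_C, map_C, hσ2, hσ1, hW₂]
    have hC2 : (C 2 : Polynomial (AlgebraicClosure ℚ)) ≠ 0 := by
      rw [Ne, C_eq_zero]
      exact two_ne_zero
    have hBW : (Bq.map BiasedShabatAux.φ).comp W₁ = (Bq.map BiasedShabatAux.φ).comp W₂ := by
      have h2 := hcon
      rw [hmapσ, hfW] at h2
      have h3 : (C 2 : Polynomial (AlgebraicClosure ℚ))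
            * ((Bq.map BiasedShabatAux.φ).comp W₁)
          = C 2 * ((Bq.map BiasedShabatAux.φ).comp W₂) := by
        linear_combination -h2
      exact mul_left_cancel₀ hC2 h3
    have hpc0 : (X * (X - C 1) ^ 2 * (X - C α) ^ 3 : Polynomial (AlgebraicClosure ℚ)) ≠ 0 :=
      ((monic_X.mul ((monic_X_sub_C (1 : AlgebraicClosure ℚ)).pow 2)).mul
        ((monic_X_sub_C α).pow 3)).ne_zero
    have hW₁der : W₁.derivative = C s * ((X * (X - C 1) ^ 2 * (X - C α) ^ 3).comp A) := by
      rw [hW₁, derivative_comp, hAder, hP]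
    have hAconst : ∀ c : AlgebraicClosure ℚ, A ≠ C c := by
      intro c hc
      have h0 : A.natDegree = 0 := by rw [hc, natDegree_C]
      rw [hA, natDegree_linear hs0] at h0
      exact one_ne_zero h0
    have hW₁d0 : W₁.derivative ≠ 0 := by
      rw [hW₁der]
      refine mul_ne_zero (by rwa [Ne, C_eq_zero]) ?_
      rw [Ne, Polynomial.comp_eq_zero_iff]
      push_neg
      exact ⟨hpc0, fun _ => hAconst _⟩
    have hW₁pos : 0 < W₁.natDegree := BiasedShabatAux.natDegree_pos_of_derivative_ne_zero hW₁d0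
    have hWdeg : W₂.natDegree = W₁.natDegree := by
      rw [hW₂, natDegree_map]
    have hudeg : 0 < (Bq.map BiasedShabatAux.φ).natDegree := by
      rw [natDegree_map]
      exact hBdeg
    obtain ⟨z, c, hz0, hW2eq⟩ :=
      BiasedShabatAux.comp_eq_comp_same_deg hudeg hW₁pos hWdeg hBW
    have hder : W₁.derivative.map σ.toRingHom = C z * W₁.derivative := by
      have h5 : W₂.derivative = C z * W₁.derivative := by
        rw [hW2eq, derivative_add, derivative_C, add_zero, derivative_C_mul]
      rw [← h5, hW₂, derivative_map]
    set x₁ := (0 - z₀) * s⁻¹ with hx₁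
    set x₂ := (1 - z₀) * s⁻¹ with hx₂
    set x₃ := (α - z₀) * s⁻¹ with hx₃
    have hAfac : ∀ y : AlgebraicClosure ℚ, A - C y = C s * (X - C ((y - z₀) * s⁻¹)) := by
      intro y
      rw [hA, mul_sub, ← C_mul]
      have h6 : s * ((y - z₀) * s⁻¹) = y - z₀ := by
        field_simp
      rw [h6, map_sub]
      ring
    have e1 : A = C s * (X - C x₁) := by
      have h7 := hAfac 0
      rwa [map_zero, sub_zero] at h7
    have e2 : A - C 1 = C s * (X - C x₂) := hAfac 1
    have e3 : A - C α = C s * (X - C x₃) := hAfac α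
    set M₁ := (X - C x₁) * ((X - C x₂) ^ 2 * (X - C x₃) ^ 3) with hM₁
    set M₂ := (X - C (σ x₁)) * ((X - C (σ x₂)) ^ 2 * (X - C (σ x₃)) ^ 3) with hM₂
    have hM : W₁.derivative = C (s ^ 7) * M₁ := by
      rw [hW₁der, mul_comp, mul_comp, pow_comp, pow_comp, sub_comp, sub_comp, X_comp,
        C_comp, C_comp, e2, e3, e1, hM₁]
      rw [show (C (s ^ 7) : Polynomial (AlgebraicClosure ℚ)) = (C s) ^ 7 from by rw [← C_pow]]
      ring
    have hmapM : M₁.map σ.toRingHom = M₂ := by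
      rw [hM₁, hM₂]
      simp only [Polynomial.map_mul, Polynomial.map_pow, Polynomial.map_sub, Polynomial.map_X,
        map_C, RingEquiv.coe_toRingHom]
      rfl
    have hMσ : W₁.derivative.map σ.toRingHom = C (σ.toRingHom (s ^ 7)) * M₂ := by
      rw [hM, Polynomial.map_mul, map_C, hmapM]
    have hMeq : C (σ.toRingHom (s ^ 7)) * M₂ = C (z * s ^ 7) * M₁ := by
      rw [← hMσ, hder, hM, ← mul_assoc, ← C_mul]
    have hmon : ∀ a b c : AlgebraicClosure ℚ,
        ((X - C a) * ((X - C b) ^ 2 * (X - C c) ^ 3)).Monic := fun a b c =>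
      (monic_X_sub_C a).mul (((monic_X_sub_C b).pow 2).mul ((monic_X_sub_C c).pow 3))
    have hlm : ∀ (d : AlgebraicClosure ℚ) (M : Polynomial (AlgebraicClosure ℚ)),
        M.Monic → (C d * M).leadingCoeff = d := by
      intro d M hMo
      rw [leadingCoeff_mul, leadingCoeff_C, hMo.leadingCoeff, mul_one]
    have hs7 : σ.toRingHom (s ^ 7) = z * s ^ 7 := by
      have h8 := congrArg leadingCoeff hMeq
      rwa [hM₂, hM₁, hlm _ _ (hmon (σ x₁) (σ x₂) (σ x₃)), hlm _ _ (hmon x₁ x₂ x₃)] at h8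
    have hzs7 : z * s ^ 7 ≠ 0 := mul_ne_zero hz0 (pow_ne_zero _ hs0)
    have hMM : M₂ = M₁ := by
      apply mul_left_cancel₀ (show (C (z * s ^ 7) : Polynomial (AlgebraicClosure ℚ)) ≠ 0 by
        rwa [Ne, C_eq_zero])
      rw [← hMeq, hs7]
    -- roots and counting
    have hroots : ∀ a b c : AlgebraicClosure ℚ,
        ((X - C a) * ((X - C b) ^ 2 * (X - C c) ^ 3)).roots
          = {a} + (2 • ({b} : Multiset (AlgebraicClosure ℚ)) + 3 • {c}) := by
      intro a b c
      rw [roots_mul (hmon a b c).ne_zero, roots_mul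
        (mul_ne_zero (pow_ne_zero _ (X_sub_C_ne_zero b)) (pow_ne_zero _ (X_sub_C_ne_zero c))),
        roots_pow, roots_pow, roots_X_sub_C, roots_X_sub_C, roots_X_sub_C]
    have hkey : ∀ y : AlgebraicClosure ℚ,
        ((if y = σ x₁ then 1 else 0) + ((if y = σ x₂ then 2 else 0)
            + (if y = σ x₃ then 3 else 0)) : ℕ)
        = (if y = x₁ then 1 else 0) + ((if y = x₂ then 2 else 0)
            + (if y = x₃ then 3 else 0)) := by
      intro y
      have h9 := congrArg (Multiset.count y) (congrArg Polynomial.roots hMM)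
      rw [hM₂, hM₁, hroots, hroots] at h9
      simp only [Multiset.count_add, Multiset.count_nsmul, Multiset.count_singleton,
        Multiset.count_cons, mul_ite, mul_one, mul_zero] at h9
      omega
    -- distinctness
    have hx12 : x₁ ≠ x₂ := by
      intro h
      have h10 := mul_right_cancel₀ (inv_ne_zero hs0) h
      exact zero_ne_one (by linear_combination h10 : (0 : AlgebraicClosure ℚ) = 1)
    have hx13 : x₁ ≠ x₃ := by
      intro h
      have h10 := mul_right_cancel₀ (inv_ne_zero hs0) h
      exact hα0 (by linear_combination -h10)
    have hx23 : x₂ ≠ x₃ := by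
      intro h
      have h10 := mul_right_cancel₀ (inv_ne_zero hs0) h
      exact hα1 (by linear_combination -h10)
    have hinj : Function.Injective σ := σ.injective
    -- σ fixes x₃
    have h3' : σ x₃ = x₃ := by
      have h := hkey x₃
      rw [if_neg (fun hh : x₃ = x₁ => hx13 hh.symm),
        if_neg (fun hh : x₃ = x₂ => hx23 hh.symm), if_pos rfl] at h
      by_cases e3 : x₃ = σ x₃
      · exact e3.symm
      rw [if_neg e3] at h
      exfalso
      by_cases f1 : x₃ = σ x₁ <;> by_cases f2 : x₃ = σ x₂
      · exact hx12 (hinj (f1.symm.trans f2))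
      · rw [if_pos f1, if_neg f2] at h; omega
      · rw [if_neg f1, if_pos f2] at h; omega
      · rw [if_neg f1, if_neg f2] at h; omega
    have h2' : σ x₂ = x₂ := by
      have h := hkey x₂
      rw [if_neg (fun hh : x₂ = x₁ => hx12 hh.symm), if_pos rfl,
        if_neg hx23] at h
      rw [if_neg (fun hh : x₂ = σ x₃ => hx23 (by rw [hh, h3']))] at h
      by_cases e2 : x₂ = σ x₂
      · exact e2.symm
      rw [if_neg e2] at h
      exfalso
      by_cases f1 : x₂ = σ x₁
      · rw [if_pos f1] at h; omega
      · rw [if_neg f1] at h; omega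
    have h1' : σ x₁ = x₁ := by
      have h := hkey x₁
      rw [if_pos rfl, if_neg hx12, if_neg hx13] at h
      rw [if_neg (fun hh : x₁ = σ x₂ => hx12 (by rw [hh, h2'])),
        if_neg (fun hh : x₁ = σ x₃ => hx13 (by rw [hh, h3']))] at h
      by_cases e1 : x₁ = σ x₁
      · exact e1.symm
      rw [if_neg e1] at h
      omega
    -- conclude
    have hsinv : σ (s⁻¹) = s⁻¹ := by
      have hsub : σ (x₂ - x₁) = x₂ - x₁ := by rw [map_sub, h2', h1']
      have hd : x₂ - x₁ = s⁻¹ := by rw [hx₂, hx₁]; ring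
      rwa [hd] at hsub
    have hz₀fix : σ z₀ = z₀ := by
      have h := h1'
      rw [hx₁, map_mul, map_sub, map_zero, hsinv] at h
      have h10 := mul_right_cancel₀ (inv_ne_zero hs0) h
      linear_combination -h10
    have hαfix : σ α = α := by
      have h := h3'
      rw [hx₃, map_mul, map_sub, hsinv, hz₀fix] at h
      have h10 := mul_right_cancel₀ (inv_ne_zero hs0) h
      linear_combination h10
    exact hα hαfix
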